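/- Let n > 0 and k_x ≥ |k_p| be real numbers with n - k_x > 0, n + k_p > 0 and (n - k_x)·(n + k_p) < 1. Then there exists r₀ > 0 such that for all r ≥ r₀, writing c = cosh(2r) and s = sinh(2r), one has ((n + c)² - (k_x + s)²)·((n + c)² - (k_p - s)²) < 4·(n + c)². -/
import Mathlib


open Real

set_option maxHeartbeats 1000000 in
theorem stmt5 (n kx kp : ℝ) (hn : 0 < n) (hk : |kp| ≤ kx)
    (h1 : 0 < n - kx) (h2 : 0 < n + kp) (h3 : (n - kx) * (n + kp) < 1) :
    ∃ r₀ > (0 : ℝ), ∀ r ≥ r₀,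
      ((n + Real.cosh (2 * r)) ^ 2 - (kx + Real.sinh (2 * r)) ^ 2) *
        ((n + Real.cosh (2 * r)) ^ 2 - (kp - Real.sinh (2 * r)) ^ 2) <
      4 * (n + Real.cosh (2 * r)) ^ 2 := by
  set F : ℝ → ℝ := fun x =>
    (n - kx + x) * (n + kp + x) * ((n + kx) * x + 1) * ((n - kp) * x + 1)
      - (2 * n * x + 1 + x ^ 2) ^ 2 with hF
  have hFcont : Continuous F := by fun_prop
  have hF0 : F 0 < 0 := by simp [hF]; nlinarith
  have hev : F ⁻¹' Set.Iio 0 ∈ nhds (0 : ℝ) :=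
    hFcont.continuousAt (Iio_mem_nhds hF0)
  obtain ⟨δ, hδ0, hball⟩ := Metric.mem_nhds_iff.1 hev
  refine ⟨max 1 ((1 - Real.log δ) / 2), lt_of_lt_of_le one_pos (le_max_left _ _), ?_⟩
  intro r hr
  set x := Real.exp (-(2 * r)) with hx
  have hx0 : (0 : ℝ) < x := Real.exp_pos _
  have hxδ : x < δ := by
    have hr1 : (1 - Real.log δ) / 2 ≤ r := le_trans (le_max_right _ _) hr
    have : -(2 * r) < Real.log δ := by linarith
    calc x = Real.exp (-(2 * r)) := hx
      _ < Real.exp (Real.log δ) := Real.exp_lt_exp.2 this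
      _ = δ := Real.exp_log hδ0
  have hFx : F x < 0 := by
    have : x ∈ Metric.ball (0 : ℝ) δ := by
      simp [Metric.mem_ball, Real.dist_eq, abs_of_pos hx0, hxδ]
    exact hball this
  have hex : Real.exp (2 * r) = x⁻¹ := by rw [hx, Real.exp_neg, inv_inv]
  have hc : Real.cosh (2 * r) = (x⁻¹ + x) / 2 := by
    rw [Real.cosh_eq, hex, ← hx]
  have hs : Real.sinh (2 * r) = (x⁻¹ - x) / 2 := by
    rw [Real.sinh_eq, hex, ← hx]
  rw [hc, hs]
  have hne : x ≠ 0 := ne_of_gt hx0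
  set P := (n + (x⁻¹ + x) / 2) ^ 2 - (kx + (x⁻¹ - x) / 2) ^ 2 with hP
  set Q := (n + (x⁻¹ + x) / 2) ^ 2 - (kp - (x⁻¹ - x) / 2) ^ 2 with hQ
  set R := 4 * (n + (x⁻¹ + x) / 2) ^ 2 with hR
  have key : (P * Q - R) * x ^ 2 * x ^ 2 = F x * x ^ 2 := by
    simp only [hP, hQ, hR, hF]
    field_simp
    ring
  have hneg : F x * x ^ 2 < 0 := mul_neg_of_neg_of_pos hFx (by positivity)
  by_contra hcon
  push_neg at hcon
  have hnn : 0 ≤ (P * Q - R) * x ^ 2 * x ^ 2 :=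
    mul_nonneg (mul_nonneg (sub_nonneg.2 hcon) (sq_nonneg x)) (sq_nonneg x)
  linarith [key ▸ hnn]
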